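/- Under the mixture construction P* over a countable regime set S with strictly positive weights, the extended conditional independence X ⫫ (Y, σ) | Z (meaning: there exists a single measurable function w(Z) such that E_{P_s}[h(X) | Y, Z] = w(Z) a.s. [P_s] for every s ∈ S and every bounded measurable h(X)) holds if and only if X ⫫ (Y, σ) | Z holds as ordinary stochastic conditional independence under P*. -/

import Mathlib

open MeasureTheory

/-- Conditional independence `X ⫫ Y | Z` under `P`, following Dawid's definition:
for every bounded measurable function `h(X)` there exists a measurable function `w(Z)`
that is a version of `E[h(X) | Y, Z]` almost surely under `P`. -/
def CondIndepFun {Ω α β γ : Type*} [MeasurableSpace Ω] [MeasurableSpace α]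
    [MeasurableSpace β] [MeasurableSpace γ]
    (P : Measure Ω) (X : Ω → α) (Y : Ω → β) (Z : Ω → γ) : Prop :=
  ∀ h : α → ℝ, Measurable h → (∃ C, ∀ x, |h x| ≤ C) →
    ∃ w : γ → ℝ, Measurable w ∧
      (fun ω => w (Z ω)) =ᵐ[P]
        P[fun ω => h (X ω) |
          MeasurableSpace.comap Y inferInstance ⊔ MeasurableSpace.comap Z inferInstance]

/-- The mixture measure `P*` on `Ω × S`: `P*(A) = ∑ₛ π(s) Pₛ(Aₛ)`. -/
noncomputable def mixtureMeasure {Ω S : Type*} [MeasurableSpace Ω] [MeasurableSpace S]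
    (P : S → Measure Ω) (π : S → ENNReal) : Measure (Ω × S) :=
  Measure.sum fun s => π s • (P s).map fun ω => (ω, s)

/-- Extended conditional independence `X ⫫ (Y, σ) | Z`: there exists a *single* measurable
function `w(Z)` such that `E_{Pₛ}[h(X) | Y, Z] = w(Z)` a.s. `[Pₛ]` for every regime `s`,
for each bounded measurable `h(X)`. -/
def ECIRegime {Ω S α β γ : Type*} [MeasurableSpace Ω] [MeasurableSpace α]
    [MeasurableSpace β] [MeasurableSpace γ]
    (P : S → Measure Ω) (X : Ω → α) (Y : Ω → β) (Z : Ω → γ) : Prop :=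
  ∀ h : α → ℝ, Measurable h → (∃ C, ∀ x, |h x| ≤ C) →
    ∃ w : γ → ℝ, Measurable w ∧
      ∀ s, (fun ω => w (Z ω)) =ᵐ[P s]
        (P s)[fun ω => h (X ω) |
          MeasurableSpace.comap Y inferInstance ⊔ MeasurableSpace.comap Z inferInstance]

section Aux
set_option linter.unusedSectionVars false

variable {Ω S β γ : Type*} [MeasurableSpace Ω] [MeasurableSpace S]
  [MeasurableSingletonClass S] [MeasurableSpace β] [MeasurableSpace γ]

lemma mixture_isProb (P : S → Measure Ω) (hP : ∀ s, IsProbabilityMeasure (P s))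
    (π : S → ENNReal) (hπ1 : ∑' s, π s = 1) :
    IsProbabilityMeasure (mixtureMeasure P π) := by
  constructor
  rw [mixtureMeasure, Measure.sum_apply _ MeasurableSet.univ]
  have : ∀ s : S, (π s • (P s).map fun ω => (ω, s)) Set.univ = π s := by
    intro s
    rw [Measure.smul_apply, Measure.map_apply (measurable_prodMk_right) MeasurableSet.univ]
    simp [(hP s).measure_univ]
  simpa [this] using hπ1

lemma mixture_setIntegral (P : S → Measure Ω) (π : S → ENNReal) {A : Set (Ω × S)}
    (hA : MeasurableSet A) {f : Ω × S → ℝ}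
    (hf : IntegrableOn f A (mixtureMeasure P π)) :
    ∫ p in A, f p ∂(mixtureMeasure P π)
      = ∑' s, (π s).toReal * ∫ ω in (fun ω => (ω, s)) ⁻¹' A, f (ω, s) ∂(P s) := by
  have hrw : (mixtureMeasure P π).restrict A
      = Measure.sum (fun s =>
          π s • ((P s).restrict ((fun ω => (ω, s)) ⁻¹' A)).map (fun ω => (ω, s))) := by
    rw [mixtureMeasure, Measure.restrict_sum _ hA]
    congr 1; funext s
    rw [Measure.restrict_smul, Measure.restrict_map (measurable_prodMk_right) hA]
  have hf' : Integrable f (Measure.sum (fun s =>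
      π s • ((P s).restrict ((fun ω => (ω, s)) ⁻¹' A)).map (fun ω => (ω, s)))) := by
    rw [← hrw]; exact hf
  rw [show (∫ p in A, f p ∂(mixtureMeasure P π)) = ∫ p, f p ∂((mixtureMeasure P π).restrict A) from rfl,
    hrw, integral_sum_measure hf']
  refine tsum_congr fun s => ?_
  rw [integral_smul_measure, (measurableEmbedding_prod_mk_right s).integral_map]
  simp [smul_eq_mul]

lemma mixture_lintegral (P : S → Measure Ω) (π : S → ENNReal) {f : Ω × S → ENNReal}
    (hf : Measurable f) :
    ∫⁻ p, f p ∂(mixtureMeasure P π) = ∑' s, π s * ∫⁻ ω, f (ω, s) ∂(P s) := by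
  rw [mixtureMeasure, lintegral_sum_measure]
  refine tsum_congr fun s => ?_
  rw [lintegral_smul_measure, lintegral_map hf measurable_prodMk_right, smul_eq_mul]

lemma mixture_integrable_slice (P : S → Measure Ω) (π : S → ENNReal) {f : Ω × S → ℝ}
    (hf : Integrable f (mixtureMeasure P π)) {s : S} (h0 : π s ≠ 0) (htop : π s ≠ ⊤) :
    Integrable (fun ω => f (ω, s)) (P s) := by
  have h1 : Integrable f (π s • (P s).map fun ω => (ω, s)) :=
    hf.mono_measure (Measure.le_sum _ s)
  have h2 : Integrable f ((P s).map fun ω => (ω, s)) :=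
    (integrable_smul_measure h0 htop).mp h1
  exact (measurableEmbedding_prod_mk_right s).integrable_map_iff.mp h2

lemma mixture_ae_slice (P : S → Measure Ω) (π : S → ENNReal) {p : Ω × S → Prop}
    (h : ∀ᵐ q ∂(mixtureMeasure P π), p q) {s : S} (h0 : π s ≠ 0) :
    ∀ᵐ ω ∂(P s), p (ω, s) := by
  have hle : (π s • (P s).map fun ω => (ω, s)) ≪ mixtureMeasure P π :=
    Measure.absolutelyContinuous_of_le (Measure.le_sum _ s)
  have h1 : ∀ᵐ q ∂(π s • (P s).map fun ω => (ω, s)), p q := hle.ae_le h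
  rw [Measure.ae_ennreal_smul_measure_iff h0] at h1
  exact ae_of_ae_map (measurable_prodMk_right).aemeasurable h1

lemma slice_measurable (Y : Ω → β) (Z : Ω → γ) (s : S) :
    @Measurable Ω (Ω × S)
      (MeasurableSpace.comap Y inferInstance ⊔ MeasurableSpace.comap Z inferInstance)
      (MeasurableSpace.comap (fun p : Ω × S => (Y p.1, p.2)) inferInstance ⊔
        MeasurableSpace.comap (fun p : Ω × S => Z p.1) inferInstance)
      (fun ω => (ω, s)) := by
  rw [measurable_iff_comap_le, MeasurableSpace.comap_sup, MeasurableSpace.comap_comp,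
    MeasurableSpace.comap_comp]
  refine sup_le ?_ ?_
  · have h1 : ((fun p : Ω × S => (Y p.1, p.2)) ∘ fun ω : Ω => (ω, s))
        = (fun y : β => (y, s)) ∘ Y := rfl
    rw [h1, ← MeasurableSpace.comap_comp]
    exact le_trans (MeasurableSpace.comap_mono
      (Measurable.comap_le measurable_prodMk_right)) le_sup_left
  · have h2 : ((fun p : Ω × S => Z p.1) ∘ fun ω : Ω => (ω, s)) = Z := rfl
    rw [h2]; exact le_sup_right

lemma fst_measurable (Y : Ω → β) (Z : Ω → γ) :
    @Measurable (Ω × S) Ω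
      (MeasurableSpace.comap (fun p : Ω × S => (Y p.1, p.2)) inferInstance ⊔
        MeasurableSpace.comap (fun p : Ω × S => Z p.1) inferInstance)
      (MeasurableSpace.comap Y inferInstance ⊔ MeasurableSpace.comap Z inferInstance)
      Prod.fst := by
  rw [measurable_iff_comap_le, MeasurableSpace.comap_sup, MeasurableSpace.comap_comp,
    MeasurableSpace.comap_comp]
  refine sup_le ?_ ?_
  · have h1 : (Y ∘ Prod.fst : Ω × S → β)
        = Prod.fst ∘ (fun p : Ω × S => (Y p.1, p.2)) := rfl
    rw [h1, ← MeasurableSpace.comap_comp]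
    exact le_trans (MeasurableSpace.comap_mono (Measurable.comap_le measurable_fst)) le_sup_left
  · have h2 : (Z ∘ Prod.fst : Ω × S → γ) = fun p : Ω × S => Z p.1 := rfl
    rw [h2]; exact le_sup_right

lemma snd_measurable (Y : Ω → β) (Z : Ω → γ) :
    @Measurable (Ω × S) S
      (MeasurableSpace.comap (fun p : Ω × S => (Y p.1, p.2)) inferInstance ⊔
        MeasurableSpace.comap (fun p : Ω × S => Z p.1) inferInstance)
      inferInstance
      Prod.snd := by
  rw [measurable_iff_comap_le]
  have h1 : (Prod.snd : Ω × S → S) = Prod.snd ∘ (fun p : Ω × S => (Y p.1, p.2)) := rfl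
  rw [h1, ← MeasurableSpace.comap_comp]
  exact le_trans (MeasurableSpace.comap_mono (Measurable.comap_le measurable_snd)) le_sup_left

end Aux


/-- auxiliary σ-algebra on `Ω`. -/
def mixH {Ω β γ : Type*} [MeasurableSpace β] [MeasurableSpace γ]
    (Y : Ω → β) (Z : Ω → γ) : MeasurableSpace Ω :=
  MeasurableSpace.comap Y inferInstance ⊔ MeasurableSpace.comap Z inferInstance

/-- auxiliary σ-algebra on `Ω × S`. -/
def mixG {Ω S β γ : Type*} [MeasurableSpace S] [MeasurableSpace β] [MeasurableSpace γ]
    (Y : Ω → β) (Z : Ω → γ) : MeasurableSpace (Ω × S) :=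
  MeasurableSpace.comap (fun p : Ω × S => (Y p.1, p.2)) inferInstance ⊔
    MeasurableSpace.comap (fun p : Ω × S => Z p.1) inferInstance

lemma measurable_Z_mixH {Ω β γ : Type*} [MeasurableSpace β] [MeasurableSpace γ]
    (Y : Ω → β) (Z : Ω → γ) : @Measurable Ω γ (mixH Y Z) _ Z :=
  measurable_iff_comap_le.mpr le_sup_right

lemma measurable_Zfst_mixG {Ω S β γ : Type*} [MeasurableSpace S] [MeasurableSpace β]
    [MeasurableSpace γ] (Y : Ω → β) (Z : Ω → γ) :
    @Measurable (Ω × S) γ (mixG Y Z) _ (fun p => Z p.1) :=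
  measurable_iff_comap_le.mpr le_sup_right


/-- Extended conditional independence `X ⫫ (Y, σ) | Z` over a countable regime set `S` holds
if and only if ordinary stochastic conditional independence `X ⫫ (Y, σ) | Z` holds under the
mixture measure `P*` (with strictly positive weights summing to one). -/
theorem eciRegime_iff_condIndepFun_mixture
    {Ω S α β γ : Type*} [MeasurableSpace Ω] [MeasurableSpace α]
    [MeasurableSpace β] [MeasurableSpace γ]
    [Countable S] [MeasurableSpace S] [MeasurableSingletonClass S]
    (P : S → Measure Ω) (hP : ∀ s, IsProbabilityMeasure (P s))
    (π : S → ENNReal) (hπ : ∀ s, 0 < π s) (hπ1 : ∑' s, π s = 1)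
    (X : Ω → α) (Y : Ω → β) (Z : Ω → γ)
    (hX : Measurable X) (hY : Measurable Y) (hZ : Measurable Z) :
    ECIRegime P X Y Z ↔
      CondIndepFun (mixtureMeasure P π)
        (fun p => X p.1) (fun p => (Y p.1, p.2)) (fun p => Z p.1) := by
  haveI hPstar : IsProbabilityMeasure (mixtureMeasure P π) := mixture_isProb P hP π hπ1
  have hπtop : ∀ s, π s ≠ ⊤ := fun s =>
    ne_top_of_le_ne_top ENNReal.one_ne_top ((ENNReal.le_tsum s).trans hπ1.le)
  have hπ0 : ∀ s, π s ≠ 0 := fun s => (hπ s).ne'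
  have hπR : ∀ s, (π s).toReal ≠ 0 := fun s =>
    ENNReal.toReal_ne_zero.mpr ⟨hπ0 s, hπtop s⟩
  have hHm0 : mixH Y Z ≤ (inferInstance : MeasurableSpace Ω) := by
    exact sup_le hY.comap_le hZ.comap_le
  have hGm0 : mixG (S := S) Y Z ≤ (inferInstance : MeasurableSpace (Ω × S)) := by
    exact sup_le (Measurable.comap_le ((hY.comp measurable_fst).prodMk measurable_snd))
      (Measurable.comap_le (hZ.comp measurable_fst))
  constructor
  · -- ECI → CondIndep under mixture
    intro hECI h hh hbdd
    obtain ⟨C, hC⟩ := hbdd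
    obtain ⟨w, hw, hws⟩ := hECI h hh ⟨C, hC⟩
    refine ⟨w, hw, ?_⟩
    have hWmeas : Measurable (fun p : Ω × S => w (Z p.1)) := hw.comp (hZ.comp measurable_fst)
    have hhXmeas : Measurable (fun p : Ω × S => h (X p.1)) := hh.comp (hX.comp measurable_fst)
    have hhXint : Integrable (fun p : Ω × S => h (X p.1)) (mixtureMeasure P π) := by
      refine ⟨hhXmeas.aestronglyMeasurable, ?_⟩
      refine HasFiniteIntegral.of_bounded (C := C) (ae_of_all _ fun p => ?_)
      simpa [Real.norm_eq_abs] using hC (X p.1)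
    have hhXintS : ∀ s, Integrable (fun ω => h (X ω)) (P s) := by
      intro s
      haveI := hP s
      refine ⟨(hh.comp hX).aestronglyMeasurable, ?_⟩
      refine HasFiniteIntegral.of_bounded (C := C) (ae_of_all _ fun ω => ?_)
      simpa [Real.norm_eq_abs] using hC (X ω)
    -- integrability of w ∘ Z ∘ fst under the mixture
    have hWint : Integrable (fun p : Ω × S => w (Z p.1)) (mixtureMeasure P π) := by
      refine ⟨hWmeas.aestronglyMeasurable, ?_⟩
      rw [hasFiniteIntegral_def]; simp only [enorm_eq_nnnorm]
      have hcalc :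
          ∫⁻ p, ‖w (Z p.1)‖₊ ∂(mixtureMeasure P π)
            = ∑' s, π s * ∫⁻ ω, ‖w (Z ω)‖₊ ∂(P s) :=
        mixture_lintegral P π (by fun_prop)
      rw [hcalc]
      have hbound : ∀ s, ∫⁻ ω, ‖w (Z ω)‖₊ ∂(P s) ≤ ENNReal.ofReal C := by
        intro s
        haveI := hP s
        have h1 : ∫⁻ ω, ‖w (Z ω)‖₊ ∂(P s)
            = ∫⁻ ω, ‖((P s)[fun ω => h (X ω)|mixH Y Z]) ω‖₊ ∂(P s) := by
          refine lintegral_congr_ae ((hws s).mono fun ω hω => ?_)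
          simp only at hω ⊢
          rw [hω]; rfl
        have h2 : ∫⁻ ω, ‖((P s)[fun ω => h (X ω)|mixH Y Z]) ω‖₊ ∂(P s)
            ≤ ∫⁻ ω, ‖h (X ω)‖₊ ∂(P s) := by
          have := eLpNorm_one_condExp_le_eLpNorm (μ := P s) (m := mixH Y Z)
            (fun ω => h (X ω))
          simp only [eLpNorm_one_eq_lintegral_enorm] at this; exact this
        have h3 : ∫⁻ ω, (‖h (X ω)‖₊ : ENNReal) ∂(P s) ≤ ENNReal.ofReal C := by
          calc ∫⁻ ω, (‖h (X ω)‖₊ : ENNReal) ∂(P s)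
              ≤ ∫⁻ _, ENNReal.ofReal C ∂(P s) := by
                refine lintegral_mono fun ω => ?_
                rw [← enorm_eq_nnnorm, ← ofReal_norm]
                exact ENNReal.ofReal_le_ofReal (by simpa [Real.norm_eq_abs] using hC (X ω))
            _ = ENNReal.ofReal C := by simp
        exact (h1 ▸ h2).trans h3
      calc ∑' s, π s * ∫⁻ ω, ‖w (Z ω)‖₊ ∂(P s)
          ≤ ∑' s, π s * ENNReal.ofReal C :=
            ENNReal.tsum_le_tsum fun s => mul_le_mul_right (hbound s) _
        _ = ENNReal.ofReal C := by rw [ENNReal.tsum_mul_right, hπ1, one_mul]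
        _ < ⊤ := ENNReal.ofReal_lt_top
    -- conclude via uniqueness of conditional expectation
    refine ae_eq_condExp_of_forall_setIntegral_eq hGm0 hhXint
      (fun A _ _ => hWint.integrableOn) ?_
      ⟨fun p => w (Z p.1),
        (hw.comp (measurable_Zfst_mixG (S := S) Y Z)).stronglyMeasurable,
        Filter.EventuallyEq.rfl⟩
    intro A hA _
    have hAm : MeasurableSet A := hGm0 A hA
    rw [mixture_setIntegral P π hAm hWint.integrableOn,
      mixture_setIntegral P π hAm hhXint.integrableOn]
    refine tsum_congr fun s => ?_
    congr 1
    haveI := hP s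
    have hslice : MeasurableSet[mixH Y Z] ((fun ω : Ω => (ω, s)) ⁻¹' A) :=
      slice_measurable Y Z s hA
    calc ∫ ω in (fun ω : Ω => (ω, s)) ⁻¹' A, w (Z ω) ∂(P s)
        = ∫ ω in (fun ω : Ω => (ω, s)) ⁻¹' A, ((P s)[fun ω => h (X ω)|mixH Y Z]) ω ∂(P s) :=
          setIntegral_congr_ae (hHm0 _ hslice) ((hws s).mono fun ω hω _ => hω)
      _ = ∫ ω in (fun ω : Ω => (ω, s)) ⁻¹' A, h (X ω) ∂(P s) :=
          setIntegral_condExp hHm0 (hhXintS s) hslice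
  · -- CondIndep under mixture → ECI
    intro hCI h hh hbdd
    obtain ⟨C, hC⟩ := hbdd
    obtain ⟨w, hw, hwae⟩ := hCI h hh ⟨C, hC⟩
    refine ⟨w, hw, fun s => ?_⟩
    haveI := hP s
    have hhXmeas : Measurable (fun p : Ω × S => h (X p.1)) := hh.comp (hX.comp measurable_fst)
    have hhXint : Integrable (fun p : Ω × S => h (X p.1)) (mixtureMeasure P π) := by
      refine ⟨hhXmeas.aestronglyMeasurable, ?_⟩
      refine HasFiniteIntegral.of_bounded (C := C) (ae_of_all _ fun p => ?_)
      simpa [Real.norm_eq_abs] using hC (X p.1)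
    have hhXs : Integrable (fun ω => h (X ω)) (P s) := by
      refine ⟨(hh.comp hX).aestronglyMeasurable, ?_⟩
      refine HasFiniteIntegral.of_bounded (C := C) (ae_of_all _ fun ω => ?_)
      simpa [Real.norm_eq_abs] using hC (X ω)
    have hWint : Integrable (fun p : Ω × S => w (Z p.1)) (mixtureMeasure P π) :=
      integrable_condExp.congr hwae.symm
    have hws : Integrable (fun ω => w (Z ω)) (P s) :=
      mixture_integrable_slice P π hWint (hπ0 s) (hπtop s)
    refine ae_eq_condExp_of_forall_setIntegral_eq hHm0 hhXs
      (fun A _ _ => hws.integrableOn) ?_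
      ⟨fun ω => w (Z ω),
        (hw.comp (measurable_Z_mixH Y Z)).stronglyMeasurable,
        Filter.EventuallyEq.rfl⟩
    intro A hA _
    have hAm0 : MeasurableSet A := hHm0 _ hA
    have hBG : MeasurableSet[mixG (S := S) Y Z] (A ×ˢ ({s} : Set S)) := by
      rw [Set.prod_eq]
      exact (fst_measurable Y Z hA).inter (snd_measurable Y Z (measurableSet_singleton s))
    have hBm0 : MeasurableSet (A ×ˢ ({s} : Set S)) := hGm0 _ hBG
    have key : ∀ f : Ω × S → ℝ, IntegrableOn f (A ×ˢ ({s} : Set S)) (mixtureMeasure P π) →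
        ∫ p in A ×ˢ ({s} : Set S), f p ∂(mixtureMeasure P π)
          = (π s).toReal * ∫ ω in A, f (ω, s) ∂(P s) := by
      intro f hf
      rw [mixture_setIntegral P π hBm0 hf]
      have hpre : (fun ω : Ω => (ω, s)) ⁻¹' (A ×ˢ ({s} : Set S)) = A := by
        ext ω; simp
      refine (tsum_eq_single s fun t ht => ?_).trans (by rw [hpre])
      have : (fun ω : Ω => (ω, t)) ⁻¹' (A ×ˢ ({s} : Set S)) = ∅ := by
        ext ω
        simp only [Set.mem_preimage, Set.mem_prod, Set.mem_singleton_iff,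
          Set.mem_empty_iff_false, iff_false, not_and]
        exact fun _ => ht
      rw [this]; simp
    have e1 : ∫ p in A ×ˢ ({s} : Set S), w (Z p.1) ∂(mixtureMeasure P π)
        = ∫ p in A ×ˢ ({s} : Set S), h (X p.1) ∂(mixtureMeasure P π) := by
      rw [setIntegral_congr_ae hBm0 (hwae.mono fun p hp _ => hp)]
      exact setIntegral_condExp (m := mixG (S := S) Y Z) hGm0 hhXint hBG
    rw [key _ hWint.integrableOn, key _ hhXint.integrableOn] at e1
    exact mul_left_cancel₀ (hπR s) e1
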